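/- arXiv:math-ph/0512095 — 2 statements merged into one kernel-verified Lean document; each statement's English description precedes it below -/
import Mathlib

section
/- For any real parameter Λ, the set B_n(Λ) of covectors e_i ± e_j (1 ≤ i < j ≤ n) together with Λe_i (1 ≤ i ≤ n) in ℝⁿ is a ∨-system. -/
open Matrix
open scoped Classical

/-- The Gram matrix `G^A = Σ_i A_i ⊗ A_i` of a finite family of covectors on `ℝⁿ`. -/
noncomputable def gram {n : ℕ} {ι : Type*} [Fintype ι] (A : ι → Fin n → ℝ) :
    Matrix (Fin n) (Fin n) ℝ := ∑ i, vecMulVec (A i) (A i)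

/-- The vector `α^∨` dual to the covector `α` via the Gram form `G^A`. -/
noncomputable def vee {n : ℕ} {ι : Type*} [Fintype ι] (A : ι → Fin n → ℝ)
    (α : Fin n → ℝ) : Fin n → ℝ := (gram A)⁻¹ *ᵥ α

/-- `A` is a ∨-system: a finite spanning family of covectors with non-degenerate Gram
form such that for every two-dimensional plane `Pl ⊂ V*` and every member `A_i ∈ Pl`,
the vector `Σ_{A_j ∈ Pl} A_j(A_i^∨) • A_j^∨` is proportional to `A_i^∨`. -/
def IsVeeSystem {n : ℕ} {ι : Type*} [Fintype ι] (A : ι → Fin n → ℝ) : Prop :=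
  Submodule.span ℝ (Set.range A) = ⊤ ∧ IsUnit (gram A) ∧
    ∀ Pl : Submodule ℝ (Fin n → ℝ), Module.finrank ℝ Pl = 2 →
      ∀ i, A i ∈ Pl → ∃ lam : ℝ,
        ∑ j ∈ Finset.univ.filter (fun j => A j ∈ Pl),
          (A j ⬝ᵥ vee A (A i)) • vee A (A j) = lam • vee A (A i)

/-- The family `B_n(Λ)`: covectors `e_i ± e_j` (`1 ≤ i < j ≤ n`) and `Λ e_i`
(`1 ≤ i ≤ n`) in `(ℝⁿ)*`. -/
def Bsystem (n : ℕ) (Λ : ℝ) :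
    ({p : Fin n × Fin n // p.1 < p.2} × Bool) ⊕ Fin n → Fin n → ℝ :=
  fun k => match k with
  | Sum.inl (p, b) => fun t =>
      (if t = p.1.1 then 1 else 0) + (if t = p.1.2 then (if b then 1 else -1) else 0)
  | Sum.inr i => fun t => if t = i then Λ else 0

namespace BV
open Set Submodule

noncomputable def sv (b : Bool) : ℝ := if b then 1 else -1
lemma sv_sq (b : Bool) : sv b * sv b = 1 := by cases b <;> norm_num [sv]
lemma sv_ne_zero (b : Bool) : sv b ≠ 0 := by cases b <;> norm_num [sv]
lemma sv_cases (b : Bool) : sv b = 1 ∨ sv b = -1 := by cases b <;> simp [sv]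

variable {n : ℕ} {Λ : ℝ}

def Ev (a : Fin n) : Fin n → ℝ := fun t => if t = a then 1 else 0
noncomputable def rt (a b : Fin n) (u : Bool) : Fin n → ℝ := fun t => Ev a t + sv u * Ev b t

lemma count1 (n : ℕ) (s : Fin n) :
    (Finset.univ.filter (fun p : Fin n × Fin n => p.1 < p.2)).sum
      (fun p => if s = p.1 then (1:ℝ) else 0) = ((n - 1 - (s:ℕ) : ℕ) : ℝ) := by
  rw [Finset.sum_filter, Fintype.sum_prod_type]
  have h1 : ∀ a : Fin n, (∑ b : Fin n, if a < b then (if s = a then (1:ℝ) else 0) else 0)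
      = if s = a then (∑ b : Fin n, if a < b then (1:ℝ) else 0) else 0 := by
    intro a; split_ifs <;> simp
  simp only [h1, Finset.sum_ite_eq, Finset.mem_univ, if_true]
  have : (∑ b : Fin n, if s < b then (1:ℝ) else 0) = ((Finset.Ioi s).card : ℝ) := by
    rw [Finset.sum_boole]
    congr 1
    congr 1
    ext b; simp
  rw [this, Fin.card_Ioi]


lemma count2 (n : ℕ) (s : Fin n) :
    (Finset.univ.filter (fun p : Fin n × Fin n => p.1 < p.2)).sum
      (fun p => if s = p.2 then (1:ℝ) else 0) = ((s:ℕ) : ℝ) := by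
  rw [Finset.sum_filter, Fintype.sum_prod_type]
  have h1 : ∀ a : Fin n, (∑ b : Fin n, if a < b then (if s = b then (1:ℝ) else 0) else 0)
      = if a < s then (1:ℝ) else 0 := by
    intro a
    have : ∀ b : Fin n, (if a < b then (if s = b then (1:ℝ) else 0) else 0)
        = if s = b then (if a < b then (1:ℝ) else 0) else 0 := by
      intro b; split_ifs <;> rfl
    simp only [this, Finset.sum_ite_eq, Finset.mem_univ, if_true]
  simp only [h1]
  have : (∑ a : Fin n, if a < s then (1:ℝ) else 0) = ((Finset.Iio s).card : ℝ) := by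
    rw [Finset.sum_boole]
    congr 1
    congr 1
    ext b; simp
  rw [this, Fin.card_Iio]

lemma gram_B {n : ℕ} (hn : 2 ≤ n) (Λ : ℝ) :
    gram (Bsystem n Λ) = (2*(n:ℝ) - 2 + Λ^2) • (1 : Matrix (Fin n) (Fin n) ℝ) := by
  ext s t
  rw [_root_.gram, Matrix.sum_apply]
  simp only [vecMulVec_apply]
  rw [Fintype.sum_sum_type]
  have hinr : (∑ i : Fin n, Bsystem n Λ (Sum.inr i) s * Bsystem n Λ (Sum.inr i) t)
      = if s = t then Λ^2 else 0 := by
    simp only [Bsystem]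
    simp only [ite_mul, mul_ite, zero_mul, mul_zero, one_mul]
    rw [Finset.sum_ite_eq]
    simp only [Finset.mem_univ, if_true]
    by_cases h : s = t
    · subst h; simp [sq]
    · simp [h, fun h' : t = s => h h'.symm]
  have hb : ∀ p : {p : Fin n × Fin n // p.1 < p.2},
      (∑ b : Bool, Bsystem n Λ (Sum.inl (p, b)) s * Bsystem n Λ (Sum.inl (p, b)) t)
      = 2*((if s = p.1.1 then (1:ℝ) else 0)*(if t = p.1.1 then 1 else 0)
          + (if s = p.1.2 then (1:ℝ) else 0)*(if t = p.1.2 then 1 else 0)) := by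
    intro p
    rw [Fintype.sum_bool]
    simp only [Bsystem, if_true, if_false, Bool.false_eq_true]
    have hneg : ∀ (c : Prop) (_ : Decidable c), (if c then (-1:ℝ) else 0) = -(if c then 1 else 0) := by
      intro c _; split <;> ring
    simp only [hneg]
    ring
  rw [Fintype.sum_prod_type]
  simp only [hb, hinr]
  rw [← Finset.sum_subtype (Finset.univ.filter (fun p : Fin n × Fin n => p.1 < p.2))
    (by intro x; simp) (fun p => 2*((if s = p.1 then (1:ℝ) else 0)*(if t = p.1 then 1 else 0)
          + (if s = p.2 then (1:ℝ) else 0)*(if t = p.2 then 1 else 0)))]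
  by_cases h : s = t
  · subst h
    have hsq : ∀ (c : Prop) (_ : Decidable c),
        (if c then (1:ℝ) else 0) * (if c then (1:ℝ) else 0) = (if c then 1 else 0) := by
      intro c _; split <;> ring
    simp only [hsq]
    rw [Finset.sum_congr rfl (fun p _ => mul_add 2 _ _), Finset.sum_add_distrib,
      ← Finset.mul_sum, ← Finset.mul_sum, count1, count2]
    have hcast : ((n - 1 - (s:ℕ) : ℕ) : ℝ) + ((s:ℕ) : ℝ) = (n:ℝ) - 1 := by
      have h1 : (n - 1 - (s:ℕ)) + (s:ℕ) = n - 1 := by omega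
      rw [← Nat.cast_add, h1, Nat.cast_sub (by omega)]
      simp
    rw [Matrix.smul_apply, Matrix.one_apply_eq]
    simp only [if_true, smul_eq_mul, mul_one]
    linarith [hcast]
  · have hz : ∀ p ∈ Finset.univ.filter (fun p : Fin n × Fin n => p.1 < p.2),
        2*((if s = p.1 then (1:ℝ) else 0)*(if t = p.1 then 1 else 0)
          + (if s = p.2 then (1:ℝ) else 0)*(if t = p.2 then 1 else 0)) = 0 := by
      intro p _
      split_ifs <;> simp_all
    rw [Finset.sum_eq_zero hz]
    simp [Matrix.one_apply, h]

lemma cpos (hn : 2 ≤ n) (Λ : ℝ) : 0 < 2*(n:ℝ) - 2 + Λ^2 := by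
  have h : (2:ℝ) ≤ (n:ℝ) := by exact_mod_cast hn
  nlinarith [sq_nonneg Λ]

lemma gram_mul (hn : 2 ≤ n) (Λ : ℝ) :
    gram (Bsystem n Λ) * ((2*(n:ℝ) - 2 + Λ^2)⁻¹ • (1 : Matrix (Fin n) (Fin n) ℝ)) = 1 := by
  rw [gram_B hn, Matrix.smul_mul, Matrix.mul_smul, smul_smul, Matrix.one_mul,
    mul_inv_cancel₀ (cpos hn Λ).ne', one_smul]

lemma isUnit_gram (hn : 2 ≤ n) (Λ : ℝ) : IsUnit (gram (Bsystem n Λ)) := by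
  have := invertibleOfRightInverse (h := gram_mul hn Λ)
  exact isUnit_of_invertible _

lemma vee_eq (hn : 2 ≤ n) (Λ : ℝ) (x : Fin n → ℝ) :
    vee (Bsystem n Λ) x = (2*(n:ℝ) - 2 + Λ^2)⁻¹ • x := by
  rw [vee, Matrix.inv_eq_right_inv (gram_mul hn Λ), Matrix.smul_mulVec,
    Matrix.one_mulVec]

lemma Ev_mem (hn : 2 ≤ n) (i : Fin n) :
    Ev i ∈ span ℝ (Set.range (Bsystem n Λ)) := by
  set j : Fin n := if i.val = 0 then ⟨1, by omega⟩ else ⟨0, by omega⟩ with hj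
  have hij : i ≠ j := by
    by_cases h : i.val = 0 <;> simp [hj, h, Fin.ext_iff] <;> omega
  rcases lt_or_gt_of_ne hij with hlt | hgt
  · have h1 := subset_span (R := ℝ) (mem_range_self (f := Bsystem n Λ)
      (Sum.inl (⟨(i, j), hlt⟩, true)))
    have h2 := subset_span (R := ℝ) (mem_range_self (f := Bsystem n Λ)
      (Sum.inl (⟨(i, j), hlt⟩, false)))
    have key : Ev i = (2⁻¹ : ℝ) • (Bsystem n Λ (Sum.inl (⟨(i, j), hlt⟩, true))
        + Bsystem n Λ (Sum.inl (⟨(i, j), hlt⟩, false))) := by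
      funext t
      simp only [Ev, Bsystem, Pi.smul_apply, Pi.add_apply, smul_eq_mul]
      split_ifs <;> simp_all <;> norm_num
    rw [key]
    exact smul_mem _ _ (add_mem h1 h2)
  · have h1 := subset_span (R := ℝ) (mem_range_self (f := Bsystem n Λ)
      (Sum.inl (⟨(j, i), hgt⟩, true)))
    have h2 := subset_span (R := ℝ) (mem_range_self (f := Bsystem n Λ)
      (Sum.inl (⟨(j, i), hgt⟩, false)))
    have key : Ev i = (2⁻¹ : ℝ) • (Bsystem n Λ (Sum.inl (⟨(j, i), hgt⟩, true))
        - Bsystem n Λ (Sum.inl (⟨(j, i), hgt⟩, false))) := by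
      funext t
      simp only [Ev, Bsystem, Pi.smul_apply, Pi.sub_apply, smul_eq_mul]
      split_ifs <;> simp_all <;> norm_num
    rw [key]
    exact smul_mem _ _ (sub_mem h1 h2)

lemma span_B (hn : 2 ≤ n) : span ℝ (Set.range (Bsystem n Λ)) = ⊤ := by
  rw [eq_top_iff]
  intro x _
  have hx : x = ∑ i : Fin n, x i • Ev i := by
    funext t
    simp only [Finset.sum_apply, Pi.smul_apply, Ev, smul_eq_mul, mul_ite, mul_one, mul_zero]
    rw [Finset.sum_ite_eq Finset.univ t x]
    simp
  rw [hx]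
  exact sum_mem fun i _ => smul_mem _ _ (Ev_mem hn i)

lemma B_inl (p : {p : Fin n × Fin n // p.1 < p.2}) (s : Bool) :
    Bsystem n Λ (Sum.inl (p, s)) = rt p.1.1 p.1.2 s := by
  funext t; simp only [Bsystem, rt, Ev, sv]; cases s <;> simp [mul_ite]
lemma B_inr (t : Fin n) : Bsystem n Λ (Sum.inr t) = Λ • Ev t := by
  funext u; simp [Bsystem, Ev, mul_ite]
lemma Ev_dot (a : Fin n) (x : Fin n → ℝ) : Ev a ⬝ᵥ x = x a := by
  simp [dotProduct, Ev, ite_mul]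
lemma rt_dot (a b : Fin n) (u : Bool) (x : Fin n → ℝ) :
    rt a b u ⬝ᵥ x = x a + sv u * x b := by
  simp [dotProduct, rt, Ev, add_mul, ite_mul, mul_ite, Finset.sum_add_distrib, mul_assoc]

def Ksub (a b : Fin n) : Submodule ℝ (Fin n → ℝ) where
  carrier := {w | ∀ t, t ≠ a → t ≠ b → w t = 0}
  add_mem' := by intro x y hx hy t h1 h2; simp only [Pi.add_apply, hx t h1 h2, hy t h1 h2, add_zero]
  zero_mem' := by intro t _ _; rfl
  smul_mem' := by intro c x hx t h1 h2; simp only [Pi.smul_apply, hx t h1 h2, smul_zero]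

lemma mem_Ksub {a b : Fin n} {x : Fin n → ℝ} :
    x ∈ Ksub a b ↔ ∀ t, t ≠ a → t ≠ b → x t = 0 := Iff.rfl

lemma coord_main (a b : Fin n) (hab : a < b) (x : Fin n → ℝ) (hx : x ∈ Ksub a b) :
    ∑ j ∈ Finset.univ.filter (fun j => Bsystem n Λ j ∈ Ksub a b),
      (Bsystem n Λ j ⬝ᵥ x) • Bsystem n Λ j = (2 + Λ^2) • x := by
  classical
  have hne : a ≠ b := hab.ne
  set A := Bsystem n Λ with hA
  set T : Finset (({p : Fin n × Fin n // p.1 < p.2} × Bool) ⊕ Fin n) :=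
    {Sum.inl (⟨(a,b),hab⟩, true), Sum.inl (⟨(a,b),hab⟩, false), Sum.inr a, Sum.inr b} with hT
  have hsub : T ⊆ Finset.univ.filter (fun j => A j ∈ Ksub a b) := by
    intro j hj
    rw [Finset.mem_filter]
    refine ⟨Finset.mem_univ _, ?_⟩
    simp only [hT, Finset.mem_insert, Finset.mem_singleton] at hj
    rcases hj with h | h | h | h <;> subst h <;> intro t h1 h2 <;>
      simp [hA, Bsystem, h1, h2]
  rw [← Finset.sum_subset hsub ?_]
  · -- evaluate the sum over T
    have d1 : (Sum.inl (⟨(a,b),hab⟩, true) :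
        ({p : Fin n × Fin n // p.1 < p.2} × Bool) ⊕ Fin n) ∉
        ({Sum.inl (⟨(a,b),hab⟩, false), Sum.inr a, Sum.inr b} : Finset _) := by simp
    have d2 : (Sum.inl (⟨(a,b),hab⟩, false) :
        ({p : Fin n × Fin n // p.1 < p.2} × Bool) ⊕ Fin n) ∉
        ({Sum.inr a, Sum.inr b} : Finset _) := by simp
    have d3 : (Sum.inr a : ({p : Fin n × Fin n // p.1 < p.2} × Bool) ⊕ Fin n) ∉
        ({Sum.inr b} : Finset _) := by simp [hne]
    rw [hT, Finset.sum_insert d1, Finset.sum_insert d2, Finset.sum_insert d3,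
      Finset.sum_singleton]
    have e1 : A (Sum.inl (⟨(a,b),hab⟩, true)) = rt a b true := B_inl _ _
    have e2 : A (Sum.inl (⟨(a,b),hab⟩, false)) = rt a b false := B_inl _ _
    have e3 : A (Sum.inr a) = Λ • Ev a := B_inr _
    have e4 : A (Sum.inr b) = Λ • Ev b := B_inr _
    rw [e1, e2, e3, e4, rt_dot, rt_dot, smul_dotProduct, smul_dotProduct, Ev_dot, Ev_dot]
    funext t
    simp only [Pi.add_apply, Pi.smul_apply, rt, Ev, smul_eq_mul, sv]
    by_cases h1 : t = a
    · subst h1; simp [hne]; ring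
    · by_cases h2 : t = b
      · subst h2; simp [fun h : t = a => h1 h, h1]; ring
      · have hx0 : x t = 0 := hx t h1 h2
        simp [h1, h2, hx0]
  · intro j hj hjT
    rw [Finset.mem_filter] at hj
    have hm := hj.2
    cases j with
    | inl pb =>
      obtain ⟨⟨⟨p, q⟩, hpq⟩, s⟩ := pb
      have hpq' : p ≠ q := ne_of_lt hpq
      rw [hA, B_inl] at hm
      simp only at hm
      have hrp : rt p q s p = (1:ℝ) := by simp [rt, Ev, hpq']
      have hrq : rt p q s q = sv s := by simp [rt, Ev, hpq'.symm]
      have hp : p = a ∨ p = b := by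
        by_contra hc
        push_neg at hc
        have h0 := hm p hc.1 hc.2
        rw [hrp] at h0
        exact one_ne_zero h0
      have hq : q = a ∨ q = b := by
        by_contra hc
        push_neg at hc
        have h0 := hm q hc.1 hc.2
        rw [hrq] at h0
        exact sv_ne_zero s h0
      rcases hp with rfl | rfl
      · rcases hq with rfl | rfl
        · exact absurd hpq (lt_irrefl _)
        · exact absurd (hjT (by cases s <;> simp [hT])) (fun h => h)
      · rcases hq with rfl | rfl
        · exact absurd hab (not_lt.mpr hpq.le)
        · exact absurd hpq (lt_irrefl _)
    | inr t =>
      by_cases hL : Λ = 0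
      · rw [hA, B_inr, hL, zero_smul]
        simp
      · rw [hA, B_inr] at hm ⊢
        have ht : t = a ∨ t = b := by
          by_contra hc
          push_neg at hc
          have h0 := hm t hc.1 hc.2
          simp [Ev] at h0
          exact hL h0
        exfalso
        rcases ht with rfl | rfl <;> exact hjT (by simp [hT])

def Tsub (a b c : Fin n) (u v : Bool) : Submodule ℝ (Fin n → ℝ) where
  carrier := {w | (∀ t, t ≠ a → t ≠ b → t ≠ c → w t = 0) ∧ w a = sv u * w b + sv v * w c}
  add_mem' := by
    rintro x y ⟨hx1, hx2⟩ ⟨hy1, hy2⟩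
    refine ⟨fun t h1 h2 h3 => ?_, ?_⟩
    · simp only [Pi.add_apply, hx1 t h1 h2 h3, hy1 t h1 h2 h3, add_zero]
    · simp only [Pi.add_apply, hx2, hy2]; ring
  zero_mem' := by exact ⟨fun t _ _ _ => rfl, by simp⟩
  smul_mem' := by
    rintro d x ⟨hx1, hx2⟩
    refine ⟨fun t h1 h2 h3 => ?_, ?_⟩
    · simp only [Pi.smul_apply, hx1 t h1 h2 h3, smul_zero]
    · simp only [Pi.smul_apply, smul_eq_mul, hx2]; ring

lemma mem_Tsub {a b c : Fin n} {u v : Bool} {x : Fin n → ℝ} :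
    x ∈ Tsub a b c u v ↔
      (∀ t, t ≠ a → t ≠ b → t ≠ c → x t = 0) ∧ x a = sv u * x b + sv v * x c := Iff.rfl

def pidx (p q : Fin n) (h : p ≠ q) (s : Bool) : {r : Fin n × Fin n // r.1 < r.2} × Bool :=
  if hpq : p < q then (⟨(p,q), hpq⟩, s) else (⟨(q,p), h.lt_or_gt.resolve_left hpq⟩, s)

lemma pidx_val (p q : Fin n) (h : p ≠ q) (s : Bool) :
    ∃ d : ℝ, (d = 1 ∨ d = -1) ∧
      Bsystem n Λ (Sum.inl (pidx p q h s)) = d • rt p q s := by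
  unfold pidx
  split_ifs with hpq
  · exact ⟨1, Or.inl rfl, by rw [B_inl, one_smul]⟩
  · refine ⟨sv s, sv_cases s, ?_⟩
    rw [B_inl]
    funext t
    simp only [rt, Pi.smul_apply, smul_eq_mul]
    linear_combination (- Ev q t) * sv_sq s

lemma pidx_inj {p q p' q' : Fin n} {h : p ≠ q} {h' : p' ≠ q'} {s s' : Bool}
    (he : pidx p q h s = pidx p' q' h' s') :
    (p = p' ∧ q = q') ∨ (p = q' ∧ q = p') := by
  unfold pidx at he
  split_ifs at he <;>
    simp only [Prod.mk.injEq, Subtype.mk.injEq] at he <;> tauto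

lemma sv_inj {s u : Bool} (h : sv s = sv u) : s = u := by
  cases s <;> cases u <;> simp_all [sv] <;> norm_num at h

lemma sv_xor (u v : Bool) : sv (u != v) = -(sv u * sv v) := by
  cases u <;> cases v <;> norm_num [sv]

lemma rt_mem_Tsub1 (a b c : Fin n) (hab : a ≠ b) (hac : a ≠ c) (hbc : b ≠ c) (u v : Bool) :
    rt a b u ∈ Tsub a b c u v := by
  constructor
  · intro t h1 h2 _
    simp [rt, Ev, h1, h2]
  · simp [rt, Ev, hab, hac, hbc, hab.symm, hac.symm, hbc.symm, sv_sq]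

lemma rt_mem_Tsub2 (a b c : Fin n) (hab : a ≠ b) (hac : a ≠ c) (hbc : b ≠ c) (u v : Bool) :
    rt a c v ∈ Tsub a b c u v := by
  constructor
  · intro t h1 _ h3
    simp [rt, Ev, h1, h3]
  · simp [rt, Ev, hab, hac, hbc, hab.symm, hac.symm, hbc.symm, sv_sq]

lemma rt_mem_Tsub3 (a b c : Fin n) (hab : a ≠ b) (hac : a ≠ c) (hbc : b ≠ c) (u v : Bool) :
    rt b c (u != v) ∈ Tsub a b c u v := by
  constructor
  · intro t _ h2 h3
    simp [rt, Ev, h2, h3]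
  · simp only [rt, Ev, hab, hac, hbc, hab.symm, hac.symm, hbc.symm, if_neg, if_pos,
      sv_xor]
    simp [hab, hac, hbc, hab.symm, hac.symm, hbc.symm]
    linear_combination sv u * sv_sq v

lemma sv_eq1 {s u : Bool} (h : (1:ℝ) = sv u * sv s) : s = u := by
  revert h; cases s <;> cases u <;> norm_num [sv]

lemma sv_eq3 {s u v : Bool} (h : (0:ℝ) = sv u + sv v * sv s) : s = (u != v) := by
  revert h; cases s <;> cases u <;> cases v <;> norm_num [sv]

lemma sv_eq4 {s u v : Bool} (h : (0:ℝ) = sv u * sv s + sv v) : s = (u != v) := by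
  revert h; cases s <;> cases u <;> cases v <;> norm_num [sv]

lemma triple_main (a b c : Fin n) (hab : a ≠ b) (hac : a ≠ c) (hbc : b ≠ c) (u v : Bool)
    (x : Fin n → ℝ) (hx : x ∈ Tsub a b c u v) :
    ∑ j ∈ Finset.univ.filter (fun j => Bsystem n Λ j ∈ Tsub a b c u v),
      (Bsystem n Λ j ⬝ᵥ x) • Bsystem n Λ j = (3:ℝ) • x := by
  classical
  set A := Bsystem n Λ with hA
  set j1 : ({p : Fin n × Fin n // p.1 < p.2} × Bool) ⊕ Fin n := Sum.inl (pidx a b hab u)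
  set j2 : ({p : Fin n × Fin n // p.1 < p.2} × Bool) ⊕ Fin n := Sum.inl (pidx a c hac v)
  set j3 : ({p : Fin n × Fin n // p.1 < p.2} × Bool) ⊕ Fin n :=
    Sum.inl (pidx b c hbc (u != v))
  set T : Finset (({p : Fin n × Fin n // p.1 < p.2} × Bool) ⊕ Fin n) := {j1, j2, j3} with hT
  have hne12 : j1 ≠ j2 := by
    intro he
    simp only [j1, j2, Sum.inl.injEq] at he
    rcases pidx_inj he with ⟨_, h2⟩ | ⟨h1, _⟩
    · exact hbc h2
    · exact hac h1
  have hne13 : j1 ≠ j3 := by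
    intro he
    simp only [j1, j3, Sum.inl.injEq] at he
    rcases pidx_inj he with ⟨h1, _⟩ | ⟨h1, _⟩
    · exact hab h1
    · exact hac h1
  have hne23 : j2 ≠ j3 := by
    intro he
    simp only [j2, j3, Sum.inl.injEq] at he
    rcases pidx_inj he with ⟨h1, _⟩ | ⟨h1, h2⟩
    · exact hab h1
    · exact hac h1
  have hmem : ∀ (p q : Fin n) (h : p ≠ q) (s : Bool), rt p q s ∈ Tsub a b c u v →
      A (Sum.inl (pidx p q h s)) ∈ Tsub a b c u v := by
    intro p q h s hm
    obtain ⟨d, _, he⟩ := pidx_val (Λ := Λ) p q h s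
    rw [hA, he]
    exact Submodule.smul_mem _ _ hm
  have hsub : T ⊆ Finset.univ.filter (fun j => A j ∈ Tsub a b c u v) := by
    intro j hj
    rw [Finset.mem_filter]
    refine ⟨Finset.mem_univ _, ?_⟩
    simp only [hT, Finset.mem_insert, Finset.mem_singleton] at hj
    rcases hj with rfl | rfl | rfl
    · exact hmem _ _ _ _ (rt_mem_Tsub1 a b c hab hac hbc u v)
    · exact hmem _ _ _ _ (rt_mem_Tsub2 a b c hab hac hbc u v)
    · exact hmem _ _ _ _ (rt_mem_Tsub3 a b c hab hac hbc u v)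
  have hf : ∀ (p q : Fin n) (h : p ≠ q) (s : Bool),
      (A (Sum.inl (pidx p q h s)) ⬝ᵥ x) • A (Sum.inl (pidx p q h s))
        = (rt p q s ⬝ᵥ x) • rt p q s := by
    intro p q h s
    obtain ⟨d, hd, he⟩ := pidx_val (Λ := Λ) p q h s
    rw [hA, he, smul_dotProduct, smul_smul, smul_eq_mul]
    congr 1
    rcases hd with rfl | rfl <;> ring
  rw [← Finset.sum_subset hsub ?_]
  · rw [hT, Finset.sum_insert (by simp [hne12, hne13]),
      Finset.sum_insert (by simp [hne23]), Finset.sum_singleton]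
    rw [hf a b hab u, hf a c hac v, hf b c hbc (u != v), rt_dot, rt_dot, rt_dot]
    obtain ⟨hs, hev⟩ := hx
    funext t
    simp only [Pi.add_apply, Pi.smul_apply, smul_eq_mul, rt, Ev]
    by_cases h1 : t = a
    · subst h1
      simp [hab, hac, hbc, Ne.symm hab, Ne.symm hac, Ne.symm hbc]
      cases u <;> cases v <;> simp [sv] at hev ⊢ <;> linarith
    · by_cases h2 : t = b
      · subst h2
        simp [hab, hac, hbc, Ne.symm hab, Ne.symm hac, Ne.symm hbc]
        cases u <;> cases v <;> simp [sv] at hev ⊢ <;> linarith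
      · by_cases h3 : t = c
        · subst h3
          simp [hab, hac, hbc, Ne.symm hab, Ne.symm hac, Ne.symm hbc]
          cases u <;> cases v <;> simp [sv] at hev ⊢ <;> linarith
        · have hx0 : x t = 0 := hs t h1 h2 h3
          simp [h1, h2, h3, hx0]
  · intro j hj hjT
    rw [Finset.mem_filter] at hj
    have hm := hj.2
    cases j with
    | inl pb =>
      obtain ⟨⟨⟨p, q⟩, hpq⟩, s⟩ := pb
      have hpq' : p ≠ q := ne_of_lt hpq
      rw [hA, B_inl] at hm
      simp only at hm
      exfalso
      apply hjT
      have hrpp : rt p q s p = (1:ℝ) := by simp [rt, Ev, hpq']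
      have hrqq : rt p q s q = sv s := by simp [rt, Ev, hpq'.symm]
      obtain ⟨hsupp, hlin⟩ := hm
      have hp : p = a ∨ p = b ∨ p = c := by
        by_contra hc
        push_neg at hc
        have h0 := hsupp p hc.1 hc.2.1 hc.2.2
        rw [hrpp] at h0
        exact one_ne_zero h0
      have hq : q = a ∨ q = b ∨ q = c := by
        by_contra hc
        push_neg at hc
        have h0 := hsupp q hc.1 hc.2.1 hc.2.2
        rw [hrqq] at h0
        exact sv_ne_zero s h0
      simp only [rt, Ev] at hlin
      rcases hp with rfl | rfl | rfl
      · rcases hq with rfl | rfl | rfl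
        · exact absurd rfl hpq'
        · -- p = a, q = b
          simp only [if_pos rfl, if_neg (Ne.symm hab), if_neg hab, if_neg (Ne.symm hac),
            if_neg (Ne.symm hbc), if_neg hbc.symm] at hlin
          simp only [mul_zero, mul_one, add_zero, zero_add, mul_ite] at hlin
          have hs : s = u := sv_eq1 (by simp at hlin; linarith [hlin])
          subst hs
          simp only [hT, Finset.mem_insert, Finset.mem_singleton]
          left
          simp only [j1, pidx, dif_pos hpq]
        · -- p = a, q = c
          simp only [if_pos rfl, if_neg (Ne.symm hab), if_neg hab, if_neg (Ne.symm hac),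
            if_neg hac, if_neg (Ne.symm hbc), if_neg hbc] at hlin
          simp only [mul_zero, mul_one, add_zero, zero_add] at hlin
          have hs : s = v := sv_eq1 (by simp at hlin; linarith [hlin])
          subst hs
          simp only [hT, Finset.mem_insert, Finset.mem_singleton]
          right; left
          simp only [j2, pidx, dif_pos hpq]
      · rcases hq with rfl | rfl | rfl
        · -- p = b, q = a
          simp only [if_pos rfl, if_neg (Ne.symm hab), if_neg hab, if_neg (Ne.symm hac),
            if_neg hac, if_neg (Ne.symm hbc), if_neg hbc] at hlin
          simp only [mul_zero, mul_one, add_zero, zero_add] at hlin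
          have hs : s = u := sv_inj (by simp at hlin; linarith [hlin])
          subst hs
          simp only [hT, Finset.mem_insert, Finset.mem_singleton]
          left
          simp only [j1, pidx, dif_neg (asymm hpq)]
        · exact absurd rfl hpq'
        · -- p = b, q = c
          simp only [if_pos rfl, if_neg (Ne.symm hab), if_neg hab, if_neg (Ne.symm hac),
            if_neg hac, if_neg (Ne.symm hbc), if_neg hbc] at hlin
          simp only [mul_zero, mul_one, add_zero, zero_add] at hlin
          have hs : s = (u != v) := sv_eq3 (by simp at hlin; linarith [hlin])
          subst hs
          simp only [hT, Finset.mem_insert, Finset.mem_singleton]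
          right; right
          simp only [j3, pidx, dif_pos hpq]
      · rcases hq with rfl | rfl | rfl
        · -- p = c, q = a
          simp only [if_pos rfl, if_neg (Ne.symm hab), if_neg hab, if_neg (Ne.symm hac),
            if_neg hac, if_neg (Ne.symm hbc), if_neg hbc] at hlin
          simp only [mul_zero, mul_one, add_zero, zero_add] at hlin
          have hs : s = v := sv_inj (by simp at hlin; linarith [hlin])
          subst hs
          simp only [hT, Finset.mem_insert, Finset.mem_singleton]
          right; left
          simp only [j2, pidx, dif_neg (asymm hpq)]
        · -- p = c, q = b
          simp only [if_pos rfl, if_neg (Ne.symm hab), if_neg hab, if_neg (Ne.symm hac),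
            if_neg hac, if_neg (Ne.symm hbc), if_neg hbc] at hlin
          simp only [mul_zero, mul_one, add_zero, zero_add] at hlin
          have hs : s = (u != v) := sv_eq4 (by simp at hlin; linarith [hlin])
          subst hs
          simp only [hT, Finset.mem_insert, Finset.mem_singleton]
          right; right
          simp only [j3, pidx, dif_neg (asymm hpq)]
        · exact absurd rfl hpq'
    | inr t =>
      by_cases hL : Λ = 0
      · rw [hA, B_inr, hL, zero_smul]
        simp
      · exfalso
        rw [hA, B_inr] at hm
        obtain ⟨hsupp, hlin⟩ := hm
        have ht : t = a ∨ t = b ∨ t = c := by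
          by_contra hc
          push_neg at hc
          have h0 := hsupp t hc.1 hc.2.1 hc.2.2
          simp [Ev] at h0
          exact hL h0
        rcases ht with rfl | rfl | rfl
        · simp [Ev, hab.symm, hac.symm] at hlin
          exact hL hlin
        · simp [Ev, hab, hbc.symm] at hlin
          exact hL (by cases u <;> simp [sv] at hlin <;> linarith)
        · simp [Ev, hac, hbc] at hlin
          exact hL (by cases v <;> simp [sv] at hlin <;> linarith)

lemma rt_swap (p q : Fin n) (s : Bool) : rt q p s = sv s • rt p q s := by
  funext t
  simp only [rt, Pi.smul_apply, smul_eq_mul]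
  linear_combination (- Ev q t) * sv_sq s

lemma span_pair_congr (x y : Fin n → ℝ) (c d : ℝ) (hc : c ≠ 0) (hd : d ≠ 0) :
    Submodule.span ℝ {c • x, d • y} = Submodule.span ℝ {x, y} := by
  apply le_antisymm
  · rw [Submodule.span_le]
    rintro z (rfl | rfl)
    · exact Submodule.smul_mem _ _ (Submodule.subset_span (Set.mem_insert _ _))
    · exact Submodule.smul_mem _ _ (Submodule.subset_span
        (Set.mem_insert_of_mem _ rfl))
  · rw [Submodule.span_le]
    rintro z (rfl | rfl)
    · have h := Submodule.smul_mem (Submodule.span ℝ ({c • z, d • y} : Set (Fin n → ℝ)))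
        c⁻¹ (Submodule.subset_span (Set.mem_insert _ _))
      rw [smul_smul, inv_mul_cancel₀ hc, one_smul] at h
      exact h
    · have h := Submodule.smul_mem (Submodule.span ℝ ({c • x, d • z} : Set (Fin n → ℝ)))
        d⁻¹ (Submodule.subset_span (Set.mem_insert_of_mem _ rfl))
      rw [smul_smul, inv_mul_cancel₀ hd, one_smul] at h
      exact h

lemma Tsub_le_span (a b c : Fin n) (hab : a ≠ b) (hac : a ≠ c) (hbc : b ≠ c)
    (u v : Bool) : Tsub a b c u v ≤ Submodule.span ℝ {rt a b u, rt a c v} := by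
  intro w hw
  obtain ⟨hs, he⟩ := hw
  rw [Submodule.mem_span_pair]
  refine ⟨sv u * w b, sv v * w c, ?_⟩
  funext t
  simp only [Pi.add_apply, Pi.smul_apply, smul_eq_mul, rt, Ev]
  by_cases h1 : t = a
  · subst h1
    cases u <;> cases v <;>
      simp [sv, hab, hac, hbc, Ne.symm hab, Ne.symm hac, Ne.symm hbc] at he ⊢ <;>
      linarith [he]
  · by_cases h2 : t = b
    · subst h2
      cases u <;> cases v <;>
        simp [sv, hab, hac, hbc, Ne.symm hab, Ne.symm hac, Ne.symm hbc] <;>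
        linarith
    · by_cases h3 : t = c
      · subst h3
        cases u <;> cases v <;>
          simp [sv, hab, hac, hbc, Ne.symm hab, Ne.symm hac, Ne.symm hbc] <;>
          linarith
      · simp only [if_neg h1, if_neg h2, if_neg h3, mul_zero, add_zero]
        rw [hs t h1 h2 h3]

lemma span_eq_Tsub (a b c : Fin n) (hab : a ≠ b) (hac : a ≠ c) (hbc : b ≠ c)
    (u v : Bool) : Submodule.span ℝ {rt a b u, rt a c v} = Tsub a b c u v := by
  apply le_antisymm
  · rw [Submodule.span_le]
    rintro z (rfl | rfl)
    · exact rt_mem_Tsub1 a b c hab hac hbc u v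
    · exact rt_mem_Tsub2 a b c hab hac hbc u v
  · exact Tsub_le_span a b c hab hac hbc u v

lemma span_eq_Ksub (p q : Fin n) (hpq : p < q) (s : Bool) (t₀ : Fin n)
    (ht : t₀ = p ∨ t₀ = q) (hΛ : Λ ≠ 0) :
    Submodule.span ℝ {Λ • Ev t₀, rt p q s} = Ksub p q := by
  have hpq' : p ≠ q := ne_of_lt hpq
  apply le_antisymm
  · rw [Submodule.span_le]
    rintro z (rfl | rfl)
    · intro t h1 h2
      rcases ht with rfl | rfl <;> simp [Ev, h1, h2]
    · intro t h1 h2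
      simp [rt, Ev, h1, h2]
  · intro w hw
    rw [Submodule.mem_span_pair]
    rcases ht with rfl | rfl
    · refine ⟨(w t₀ - sv s * w q) / Λ, sv s * w q, ?_⟩
      funext t
      simp only [Pi.add_apply, Pi.smul_apply, smul_eq_mul, rt, Ev]
      by_cases h1 : t = t₀
      · subst h1
        simp only [if_pos rfl, if_neg hpq']
        field_simp
        try (cases s <;> simp [sv] <;> try ring)
      · by_cases h2 : t = q
        · subst h2
          simp only [if_pos rfl, if_neg h1]
          cases s <;> simp [sv] <;> try ring
        · simp only [if_neg h1, if_neg h2, mul_zero, add_zero, mul_one]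
          rw [hw t h1 h2]
    · refine ⟨(w t₀ - w p * sv s) / Λ, w p, ?_⟩
      funext t
      simp only [Pi.add_apply, Pi.smul_apply, smul_eq_mul, rt, Ev]
      by_cases h1 : t = t₀
      · subst h1
        simp only [if_pos rfl, if_neg (Ne.symm hpq')]
        field_simp
        try (cases s <;> simp [sv] <;> try ring)
      · by_cases h2 : t = p
        · subst h2
          simp only [if_pos rfl, if_neg h1]
          cases s <;> simp [sv] <;> try ring
        · simp only [if_neg h1, if_neg h2, mul_zero, add_zero, mul_one]
          rw [hw t h2 h1]

lemma B_inl' (a b : Fin n) (h : a < b) (s : Bool) :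
    Bsystem n Λ (Sum.inl (⟨(a,b),h⟩, s)) = rt a b s := B_inl _ _

lemma rt_mem_Ksub (a b : Fin n) (s : Bool) : rt a b s ∈ Ksub a b := by
  intro t h1 h2
  simp [rt, Ev, h1, h2]

lemma Ev_mem_Ksub {t p q : Fin n} (ht : t = p ∨ t = q) : Ev t ∈ Ksub p q := by
  intro r h1 h2
  rcases ht with rfl | rfl <;> simp [Ev, h1, h2]

lemma plane_eq_span (Pl : Submodule ℝ (Fin n → ℝ)) (hPl : Module.finrank ℝ Pl = 2)
    (α β : Fin n → ℝ) (hα : α ∈ Pl) (hβ : β ∈ Pl) (hβ0 : β ≠ 0)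
    (hnm : ∀ c : ℝ, α ≠ c • β) : Pl = Submodule.span ℝ {α, β} := by
  have hind : LinearIndependent ℝ ![α, β] := by
    rw [linearIndependent_fin2]
    constructor
    · simpa using hβ0
    · intro a ha
      exact hnm a (by simpa using ha.symm)
  have hr : Set.range ![α, β] = {α, β} := by
    ext z
    simp only [Set.mem_range, Fin.exists_fin_two, Matrix.cons_val_zero, Matrix.cons_val_one,
      Matrix.head_cons, Set.mem_insert_iff, Set.mem_singleton_iff]
    constructor
    · rintro (rfl | rfl)
      · exact Or.inl rfl
      · exact Or.inr rfl
    · rintro (rfl | rfl)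
      · exact Or.inl rfl
      · exact Or.inr rfl
  have h2 : Module.finrank ℝ (Submodule.span ℝ ({α, β} : Set (Fin n → ℝ))) = 2 := by
    rw [← hr, finrank_span_eq_card hind]
    simp
  have hle : Submodule.span ℝ ({α, β} : Set (Fin n → ℝ)) ≤ Pl := by
    rw [Submodule.span_le]
    rintro z (rfl | rfl) <;> assumption
  exact (Submodule.eq_of_le_of_finrank_le hle (by rw [hPl, h2])).symm

lemma key (Pl : Submodule ℝ (Fin n → ℝ)) (hPl : Module.finrank ℝ Pl = 2)
    (i : ({p : Fin n × Fin n // p.1 < p.2} × Bool) ⊕ Fin n)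
    (hi : Bsystem n Λ i ∈ Pl) :
    ∃ μ : ℝ, ∑ j ∈ Finset.univ.filter (fun j => Bsystem n Λ j ∈ Pl),
      (Bsystem n Λ j ⬝ᵥ Bsystem n Λ i) • Bsystem n Λ j = μ • Bsystem n Λ i := by
  classical
  by_cases hα0 : Bsystem n Λ i = 0
  · refine ⟨0, ?_⟩
    rw [hα0]
    simp
  by_cases hB : ∀ j, Bsystem n Λ j ∈ Pl → Bsystem n Λ j ⬝ᵥ Bsystem n Λ i ≠ 0 →
      ∃ c : ℝ, Bsystem n Λ j = c • Bsystem n Λ i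
  · have hmem : (∑ j ∈ Finset.univ.filter (fun j => Bsystem n Λ j ∈ Pl),
        (Bsystem n Λ j ⬝ᵥ Bsystem n Λ i) • Bsystem n Λ j)
        ∈ Submodule.span ℝ {Bsystem n Λ i} := by
      apply Submodule.sum_mem
      intro j hj
      rw [Finset.mem_filter] at hj
      by_cases hd : Bsystem n Λ j ⬝ᵥ Bsystem n Λ i = 0
      · rw [hd, zero_smul]
        exact Submodule.zero_mem _
      · obtain ⟨c, hc⟩ := hB j hj.2 hd
        rw [hc, smul_smul]
        exact Submodule.smul_mem _ _ (Submodule.mem_span_singleton_self _)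
    obtain ⟨μ, hμ⟩ := Submodule.mem_span_singleton.mp hmem
    exact ⟨μ, hμ.symm⟩
  · push_neg at hB
    obtain ⟨j₀, hj₀Pl, hdot, hnm⟩ := hB
    have hβ0 : Bsystem n Λ j₀ ≠ 0 := by
      intro h
      rw [h] at hdot
      simp at hdot
    have hnm' : ∀ c : ℝ, Bsystem n Λ i ≠ c • Bsystem n Λ j₀ := by
      intro c hc
      rcases eq_or_ne c 0 with rfl | hc0
      · rw [zero_smul] at hc
        exact hα0 hc
      · exact hnm c⁻¹ (by rw [hc, smul_smul, inv_mul_cancel₀ hc0, one_smul])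
    have hspan : Pl = Submodule.span ℝ {Bsystem n Λ i, Bsystem n Λ j₀} :=
      plane_eq_span Pl hPl _ _ hi hj₀Pl hβ0 hnm'
    rcases i with ⟨⟨⟨a, b⟩, hab⟩, s⟩ | t
    · have hab' : a < b := hab
      rcases j₀ with ⟨⟨⟨p, q⟩, hpq⟩, s'⟩ | t'
      · -- both roots
        have hpq' : p < q := hpq
        rw [B_inl' a b hab' s] at hspan hα0 hnm hdot ⊢
        rw [B_inl' p q hpq' s'] at hspan hnm hdot
        rw [rt_dot] at hdot
        by_cases hpa : p = a
        · subst hpa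
          by_cases hqb : q = b
          · subst hqb
            exfalso
            by_cases hss : s' = s
            · subst hss
              exact hnm 1 (by rw [one_smul])
            · apply hdot
              have e1 : rt p q s p = 1 := by simp [rt, Ev, ne_of_lt hpq']
              have e2 : rt p q s q = sv s := by simp [rt, Ev, (ne_of_lt hpq').symm]
              rw [e1, e2]
              cases s <;> cases s' <;> simp_all [sv]
          · -- triple, center p, others b q
            have hbq : b ≠ q := fun h => hqb h.symm
            have h1 : Pl = Tsub p b q s s' := by
              rw [hspan, span_eq_Tsub p b q (ne_of_lt hab') (ne_of_lt hpq') hbq s s']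
            rw [h1]
            exact ⟨3, triple_main p b q (ne_of_lt hab') (ne_of_lt hpq') hbq s s' _
              (rt_mem_Tsub1 p b q (ne_of_lt hab') (ne_of_lt hpq') hbq s s')⟩
        · by_cases hpb : p = b
          · subst hpb
            -- center p (= b), others a q ; α = rt a p s = sv s • rt p a s
            have hpa' : p ≠ a := hpa
            have hqa : q ≠ a := fun h => (h ▸ hpq').asymm hab'
            have haq : a ≠ q := fun h => hqa h.symm
            have hα' : rt a p s = sv s • rt p a s := rt_swap p a s
            have h1 : Pl = Tsub p a q s s' := by
              rw [hspan, hα']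
              have hcongr := span_pair_congr (rt p a s) (rt p q s') (sv s) 1
                (sv_ne_zero s) one_ne_zero
              rw [one_smul] at hcongr
              rw [hcongr, span_eq_Tsub p a q hpa' (ne_of_lt hpq') haq s s']
            rw [h1]
            refine ⟨3, triple_main p a q hpa' (ne_of_lt hpq') haq s s' _ ?_⟩
            rw [hα']
            exact Submodule.smul_mem _ _ (rt_mem_Tsub1 p a q hpa' (ne_of_lt hpq') haq s s')
          · by_cases hqa : q = a
            · subst hqa
              -- center q (= a), others b p ; β = rt p q s' = sv s' • rt q p s'
              have hpb' : p ≠ b := fun h => (h ▸ hpq').asymm hab'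
              have hbp : b ≠ p := fun h => hpb' h.symm
              have hβ' : rt p q s' = sv s' • rt q p s' := rt_swap q p s'
              have h1 : Pl = Tsub q b p s s' := by
                rw [hspan, hβ']
                have hcongr := span_pair_congr (rt q b s) (rt q p s') 1 (sv s')
                  one_ne_zero (sv_ne_zero s')
                rw [one_smul] at hcongr
                rw [hcongr, span_eq_Tsub q b p (ne_of_lt hab') (Ne.symm hpa) hbp s s']
              rw [h1]
              exact ⟨3, triple_main q b p (ne_of_lt hab') (Ne.symm hpa) hbp s s' _
                (rt_mem_Tsub1 q b p (ne_of_lt hab') (Ne.symm hpa) hbp s s')⟩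
            · by_cases hqb : q = b
              · subst hqb
                -- center q (= b), others a p
                have hqa' : q ≠ a := fun h => hqa h
                have hpa' : p ≠ a := hpa
                have hap : a ≠ p := fun h => hpa h.symm
                have hα' : rt a q s = sv s • rt q a s := rt_swap q a s
                have hβ' : rt p q s' = sv s' • rt q p s' := rt_swap q p s'
                have h1 : Pl = Tsub q a p s s' := by
                  rw [hspan, hα', hβ', span_pair_congr (rt q a s) (rt q p s') (sv s) (sv s')
                    (sv_ne_zero s) (sv_ne_zero s'),
                    span_eq_Tsub q a p (Ne.symm (ne_of_lt hab')) (Ne.symm hpb) hap s s']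
                rw [h1]
                refine ⟨3, triple_main q a p (Ne.symm (ne_of_lt hab')) (Ne.symm hpb) hap s s' _ ?_⟩
                rw [hα']
                exact Submodule.smul_mem _ _
                  (rt_mem_Tsub1 q a p (Ne.symm (ne_of_lt hab')) (Ne.symm hpb) hap s s')
              · exfalso
                apply hdot
                simp [rt, Ev, hpa, hpb, hqa, hqb]
      · -- i root, j₀ = Λ e_{t'}
        rw [B_inl' a b hab' s] at hspan hα0 hnm hdot ⊢
        rw [B_inr t'] at hspan hnm hdot
        have hΛ : Λ ≠ 0 := by
          intro h
          apply hβ0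
          rw [B_inr t', h, zero_smul]
        have ht' : t' = a ∨ t' = b := by
          by_contra hc
          push_neg at hc
          apply hdot
          rw [smul_dotProduct, Ev_dot]
          simp [rt, Ev, hc.1, hc.2]
        have h1 : Pl = Ksub a b := by
          rw [hspan, Set.pair_comm, span_eq_Ksub a b hab' s t' ht' hΛ]
        rw [h1]
        exact ⟨2 + Λ^2, coord_main a b hab' _ (rt_mem_Ksub a b s)⟩
    · -- i = Λ e_t
      have hΛ : Λ ≠ 0 := by
        intro h
        apply hα0
        rw [B_inr t, h, zero_smul]
      rcases j₀ with ⟨⟨⟨p, q⟩, hpq⟩, s'⟩ | t'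
      · have hpq' : p < q := hpq
        rw [B_inr t] at hspan hα0 hnm hdot ⊢
        rw [B_inl' p q hpq' s'] at hspan hnm hdot
        have ht : t = p ∨ t = q := by
          by_contra hc
          push_neg at hc
          apply hdot
          rw [rt_dot]
          simp [Ev, hc.1.symm, hc.2.symm, fun h : p = t => hc.1 h.symm, fun h : q = t => hc.2 h.symm]
        have h1 : Pl = Ksub p q := by
          rw [hspan, span_eq_Ksub p q hpq' s' t ht hΛ]
        rw [h1]
        exact ⟨2 + Λ^2, coord_main p q hpq' _
          (Submodule.smul_mem _ _ (Ev_mem_Ksub ht))⟩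
      · -- both Λ e
        exfalso
        rw [B_inr t] at hnm hdot
        rw [B_inr t'] at hnm hdot
        by_cases htt : t' = t
        · subst htt
          exact hnm 1 (by rw [one_smul])
        · apply hdot
          rw [smul_dotProduct, Ev_dot]
          simp [Ev, htt]

end BV

/-- for any real parameter `Λ`, the set `B_n(Λ)` of covectors `e_i ± e_j`
(`1 ≤ i < j ≤ n`) together with `Λ e_i` (`1 ≤ i ≤ n`) in `ℝⁿ` is a ∨-system. -/
theorem Bsystem_isVeeSystem (n : ℕ) (hn : 2 ≤ n) (Λ : ℝ) :
    IsVeeSystem (Bsystem n Λ) := by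
  refine ⟨BV.span_B hn, BV.isUnit_gram hn Λ, ?_⟩
  intro Pl hPl i hi
  obtain ⟨μ, hμ⟩ := BV.key Pl hPl i hi
  set c : ℝ := 2*(n:ℝ) - 2 + Λ^2 with hc
  refine ⟨c⁻¹ * μ, ?_⟩
  simp only [BV.vee_eq hn Λ, ← hc]
  have hstep : ∀ j, (Bsystem n Λ j ⬝ᵥ c⁻¹ • Bsystem n Λ i) • c⁻¹ • Bsystem n Λ j
      = (c⁻¹ * c⁻¹) • ((Bsystem n Λ j ⬝ᵥ Bsystem n Λ i) • Bsystem n Λ j) := by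
    intro j
    rw [dotProduct_smul, smul_eq_mul, smul_smul, smul_smul]
    congr 1
    ring
  rw [Finset.sum_congr rfl (fun j _ => hstep j), ← Finset.smul_sum, hμ, smul_smul,
    smul_smul]
  congr 1
  ring
end

section
/- For n ≥ 7, the set {e_i ± e_j (1 ≤ i < j ≤ n), Λe_i, M(e_1 ± e_2 ± … ± e_n)} in ℝⁿ is a ∨-system only if M = 0. In particular for n = 7, the covectors M(e_1+e_2+e_3+e_4+e_5+e_6+e_7) and M(e_1+e_2+e_3−e_4−e_5−e_6−e_7) are the only elements of the set in their common 2-plane, so the ∨-condition forces them to be G-orthogonal, which gives M = 0. -/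
open Matrix
open scoped Classical

/-- The `Fₙ`-type family: covectors `e_i ± e_j` (`1 ≤ i < j ≤ n`), `Λ e_i`
(`1 ≤ i ≤ n`), and `M(e_1 ± e_2 ± ⋯ ± e_n)` (all sign choices, taken up to overall
sign by fixing the sign of `e_1` to be `+`). -/
def Fnsystem (n : ℕ) (h : 0 < n) (Λ M : ℝ) :
    (({p : Fin n × Fin n // p.1 < p.2} × Bool) ⊕ Fin n ⊕
      {ε : Fin n → Bool // ε ⟨0, h⟩ = true}) → Fin n → ℝ :=
  fun k => match k with
  | Sum.inl (p, b) => fun t =>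
      (if t = p.1.1 then 1 else 0) + (if t = p.1.2 then (if b then 1 else -1) else 0)
  | Sum.inr (Sum.inl i) => fun t => if t = i then Λ else 0
  | Sum.inr (Sum.inr ε) => fun t => M * (if ε.1 t then 1 else -1)

lemma my_sum_eq_add {ι M : Type*} [AddCommMonoid M] {s : Finset ι} {f : ι → M} {a b : ι}
    (ha : a ∈ s) (hb : b ∈ s) (hab : a ≠ b)
    (h : ∀ c ∈ s, c ≠ a → c ≠ b → f c = 0) : ∑ x ∈ s, f x = f a + f b := by
  classical
  rw [← Finset.add_sum_erase _ f ha, ← Finset.add_sum_erase _ f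
    (Finset.mem_erase.2 ⟨Ne.symm hab, hb⟩)]
  have h0 : ∑ x ∈ (s.erase a).erase b, f x = 0 := Finset.sum_eq_zero (fun c hc => by
    simp only [Finset.mem_erase] at hc
    exact h c hc.2.2 hc.2.1 hc.1)
  rw [h0, add_zero]

lemma sigma_eq_iff (b b' : Bool) :
    ((if b then (1:ℝ) else -1) = (if b' then 1 else -1)) ↔ b = b' := by
  cases b <;> cases b' <;> norm_num

lemma card_eps {n : ℕ} (hn : 0 < n) :
    Fintype.card {ε : Fin n → Bool // ε ⟨0, hn⟩ = true} = 2 ^ (n - 1) := by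
  set z : Fin n := ⟨0, hn⟩
  have e : {ε : Fin n → Bool // ε z = true} ≃ ({i : Fin n // i ≠ z} → Bool) :=
    { toFun := fun ε i => ε.1 i.1
      invFun := fun g => ⟨fun i => if h : i = z then true else g ⟨i, h⟩, by simp⟩
      left_inv := fun ε => Subtype.ext (funext fun i => by
        by_cases h : i = z
        · subst h; simpa using ε.2.symm
        · simp [h])
      right_inv := fun g => funext fun i => by simp [i.2] }
  rw [Fintype.card_congr e, Fintype.card_fun, Fintype.card_bool]
  congr 1
  have : Fintype.card {i : Fin n // i ≠ z} = n - 1 := by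
    have h1 := Fintype.card_subtype_compl (fun i : Fin n => i = z)
    rw [Fintype.card_subtype_eq, Fintype.card_fin] at h1
    simpa using h1
  exact this

lemma eps_sum_zero {n : ℕ} (hn : 0 < n) (s t u : Fin n) (huz : u ≠ ⟨0, hn⟩)
    (hc : (u = s ∧ u ≠ t) ∨ (u = t ∧ u ≠ s)) :
    ∑ ε : {ε : Fin n → Bool // ε ⟨0, hn⟩ = true},
      (if ε.1 s then (1:ℝ) else -1) * (if ε.1 t then 1 else -1) = 0 := by
  set z : Fin n := ⟨0, hn⟩
  have key : ∀ ε : Fin n → Bool,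
      (if (Function.update ε u (!ε u)) s then (1:ℝ) else -1) *
        (if (Function.update ε u (!ε u)) t then 1 else -1) =
      -((if ε s then (1:ℝ) else -1) * (if ε t then 1 else -1)) := by
    intro ε
    rcases hc with ⟨rfl, hut⟩ | ⟨rfl, hus⟩
    · rw [Function.update_self, Function.update_of_ne (Ne.symm hut)]
      cases h : ε u <;> cases h2 : ε t <;> simp [h, h2] <;> ring
    · rw [Function.update_self, Function.update_of_ne (Ne.symm hus)]
      cases h : ε s <;> cases h2 : ε u <;> simp [h, h2] <;> ring
  refine Finset.sum_ninvolution
    (fun ε => ⟨Function.update ε.1 u (!ε.1 u), by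
      rw [Function.update_of_ne (Ne.symm huz)]; exact ε.2⟩)
    (fun ε => by have h := key ε.1; dsimp only; linarith)
    (fun ε _ => by
      intro h
      have := congrArg (fun f => f.1 u) h
      simp only [Function.update_self] at this
      exact (Bool.not_ne_self _) this)
    (fun ε => Finset.mem_univ _)
    (fun ε => by
      apply Subtype.ext
      funext i
      by_cases hiu : i = u
      · subst hiu; simp
      · simp [Function.update_of_ne hiu])

lemma eps_sum {n : ℕ} (hn : 0 < n) (s t : Fin n) :
    ∑ ε : {ε : Fin n → Bool // ε ⟨0, hn⟩ = true},
      (if ε.1 s then (1:ℝ) else -1) * (if ε.1 t then 1 else -1) =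
    if s = t then (2:ℝ) ^ (n - 1) else 0 := by
  by_cases hst : s = t
  · subst hst
    rw [if_pos rfl]
    have h1 : ∀ ε : {ε : Fin n → Bool // ε ⟨0, hn⟩ = true},
        (if ε.1 s then (1:ℝ) else -1) * (if ε.1 s then 1 else -1) = 1 := by
      intro ε; cases h : ε.1 s <;> simp [h]
    rw [Finset.sum_congr rfl (fun ε _ => h1 ε), Finset.sum_const, Finset.card_univ,
      card_eps hn, nsmul_eq_mul]
    push_cast
    ring
  · rw [if_neg hst]
    by_cases hsz : s = (⟨0, hn⟩ : Fin n)
    · exact eps_sum_zero hn s t t (fun h => hst (hsz.trans h.symm))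
        (Or.inr ⟨rfl, Ne.symm hst⟩)
    · exact eps_sum_zero hn s t s hsz (Or.inl ⟨rfl, hst⟩)

-- counting lemma
lemma count_pairs {n : ℕ} (s : Fin n) :
    ∑ q : Fin n, ∑ r : Fin n,
      (if q < r then ((if s = q then (1:ℝ) else 0) + (if s = r then 1 else 0)) else 0)
    = (n:ℝ) - 1 := by
  have split : ∀ q r : Fin n,
      (if q < r then ((if s = q then (1:ℝ) else 0) + (if s = r then 1 else 0)) else 0)
      = (if s = q then (if q < r then (1:ℝ) else 0) else 0)
        + (if s = r then (if q < r then (1:ℝ) else 0) else 0) := by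
    intro q r; split_ifs <;> simp
  simp_rw [split, Finset.sum_add_distrib]
  have h1 : ∑ q : Fin n, ∑ r : Fin n, (if s = q then (if q < r then (1:ℝ) else 0) else 0)
      = ∑ r : Fin n, (if s < r then (1:ℝ) else 0) := by
    have : ∀ q : Fin n, ∑ r : Fin n, (if s = q then (if q < r then (1:ℝ) else 0) else 0)
        = if s = q then (∑ r : Fin n, if q < r then (1:ℝ) else 0) else 0 := by
      intro q; split <;> simp
    rw [Finset.sum_congr rfl (fun q _ => this q), Finset.sum_ite_eq]
    simp
  have h2 : ∑ q : Fin n, ∑ r : Fin n, (if s = r then (if q < r then (1:ℝ) else 0) else 0)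
      = ∑ q : Fin n, (if q < s then (1:ℝ) else 0) := by
    rw [Finset.sum_comm]
    have : ∀ r : Fin n, ∑ q : Fin n, (if s = r then (if q < r then (1:ℝ) else 0) else 0)
        = if s = r then (∑ q : Fin n, if q < r then (1:ℝ) else 0) else 0 := by
      intro r; split <;> simp
    rw [Finset.sum_congr rfl (fun r _ => this r), Finset.sum_ite_eq]
    simp
  rw [h1, h2, ← Finset.sum_add_distrib]
  have h3 : ∀ r : Fin n, ((if s < r then (1:ℝ) else 0) + (if r < s then (1:ℝ) else 0))
      = 1 - (if r = s then 1 else 0) := by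
    intro r
    rcases lt_trichotomy s r with h | h | h
    · rw [if_pos h, if_neg (asymm h), if_neg (by rintro rfl; exact lt_irrefl _ h)]; ring
    · subst h; simp
    · rw [if_neg (asymm h), if_pos h, if_neg (by rintro rfl; exact lt_irrefl _ h)]; ring
  rw [Finset.sum_congr rfl (fun r _ => h3 r), Finset.sum_sub_distrib, Finset.sum_const,
    Finset.sum_ite_eq', Finset.card_univ, Fintype.card_fin]
  simp

lemma gram_row {n : ℕ} (h : 0 < n) (Λ M : ℝ) (s : Fin n) :
    ∑ t, gram (Fnsystem n h Λ M) s t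
      = (2*(n:ℝ) - 2) + Λ^2 + 2^(n-1) * M^2 := by
  set A := Fnsystem n h Λ M with hA
  have hgram : ∀ t, gram A s t = ∑ i, A i s * A i t := by
    intro t; simp [_root_.gram, Matrix.sum_apply, vecMulVec_apply]
  simp_rw [hgram]
  rw [Finset.sum_comm]
  have hmul : ∀ i, ∑ t, A i s * A i t = A i s * ∑ t, A i t := by
    intro i; rw [Finset.mul_sum]
  simp_rw [hmul]
  rw [Fintype.sum_sum_type, Fintype.sum_sum_type]
  have part1 : ∑ x : {p : Fin n × Fin n // p.1 < p.2} × Bool,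
      (A (Sum.inl x) s * ∑ t, A (Sum.inl x) t) = 2*(n:ℝ) - 2 := by
    have hterm1 : ∀ (p : {p : Fin n × Fin n // p.1 < p.2}) (b : Bool),
        A (Sum.inl (p, b)) s * ∑ t, A (Sum.inl (p, b)) t
        = ((if s = p.1.1 then (1:ℝ) else 0) + (if s = p.1.2 then (if b then 1 else -1) else 0))
          * (1 + (if b then 1 else -1)) := by
      intro p b
      have h1 : ∑ t, A (Sum.inl (p, b)) t = 1 + (if b then (1:ℝ) else -1) := by
        simp [hA, Fnsystem, Finset.sum_add_distrib]
      rw [h1]; simp [hA, Fnsystem]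
    rw [Fintype.sum_prod_type]
    simp_rw [hterm1]
    have hb : ∀ p : {p : Fin n × Fin n // p.1 < p.2},
        ∑ b : Bool, ((if s = p.1.1 then (1:ℝ) else 0) + (if s = p.1.2 then (if b then 1 else -1) else 0))
          * (1 + (if b then 1 else -1))
        = 2 * ((if s = p.1.1 then (1:ℝ) else 0) + (if s = p.1.2 then 1 else 0)) := by
      intro p
      rw [Fintype.sum_bool]
      norm_num
      ring
    rw [Finset.sum_congr rfl (fun p _ => hb p), ← Finset.mul_sum]
    have hsubty : ∑ p : {p : Fin n × Fin n // p.1 < p.2},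
        ((if s = p.1.1 then (1:ℝ) else 0) + (if s = p.1.2 then 1 else 0))
        = ∑ p ∈ Finset.univ.filter (fun p : Fin n × Fin n => p.1 < p.2),
          ((if s = p.1 then (1:ℝ) else 0) + (if s = p.2 then 1 else 0)) := by
      rw [← Finset.sum_subtype (Finset.univ.filter (fun p : Fin n × Fin n => p.1 < p.2))
        (by intro x; simp) (fun p : Fin n × Fin n => (if s = p.1 then (1:ℝ) else 0) + (if s = p.2 then 1 else 0))]
    rw [hsubty, Finset.sum_filter, Fintype.sum_prod_type]
    rw [count_pairs s]
    ring
  have part2 : ∑ i : Fin n, (A (Sum.inr (Sum.inl i)) s * ∑ t, A (Sum.inr (Sum.inl i)) t) = Λ^2 := by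
    have : ∀ i : Fin n, A (Sum.inr (Sum.inl i)) s * ∑ t, A (Sum.inr (Sum.inl i)) t
        = (if s = i then Λ else 0) * Λ := by
      intro i
      have h1 : ∑ t, A (Sum.inr (Sum.inl i)) t = Λ := by simp [hA, Fnsystem]
      rw [h1]; simp [hA, Fnsystem]
    simp_rw [this]
    rw [← Finset.sum_mul, Finset.sum_ite_eq]
    simp [sq]
  have part3 : ∑ ε : {ε : Fin n → Bool // ε ⟨0, h⟩ = true},
      (A (Sum.inr (Sum.inr ε)) s * ∑ t, A (Sum.inr (Sum.inr ε)) t) = 2^(n-1) * M^2 := by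
    have hterm : ∀ ε : {ε : Fin n → Bool // ε ⟨0, h⟩ = true},
        A (Sum.inr (Sum.inr ε)) s * ∑ t, A (Sum.inr (Sum.inr ε)) t
        = M^2 * ∑ t : Fin n, (if ε.1 s then (1:ℝ) else -1) * (if ε.1 t then 1 else -1) := by
      intro ε
      simp only [hA, Fnsystem]
      rw [Finset.mul_sum, Finset.mul_sum]
      refine Finset.sum_congr rfl (fun t _ => by ring)
    simp_rw [hterm]
    rw [← Finset.mul_sum, Finset.sum_comm]
    have : ∀ t : Fin n, ∑ ε : {ε : Fin n → Bool // ε ⟨0, h⟩ = true},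
        (if ε.1 s then (1:ℝ) else -1) * (if ε.1 t then 1 else -1)
        = if s = t then (2:ℝ)^(n-1) else 0 := fun t => eps_sum h s t
    rw [Finset.sum_congr rfl (fun t _ => this t), Finset.sum_ite_eq]
    simp [mul_comm]
  rw [part1, part2, part3]
  ring

lemma sig_true {M : ℝ} (hM : M ≠ 0) {b : Bool} (h : M * (if b then (1:ℝ) else -1) = M) :
    b = true := by
  cases b
  · exfalso; norm_num at h; apply hM; linarith
  · rfl

lemma sig_false {M : ℝ} (hM : M ≠ 0) {b : Bool} (h : M * (if b then (1:ℝ) else -1) = -M) :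
    b = false := by
  cases b
  · rfl
  · exfalso; norm_num at h; apply hM; linarith

lemma classify {n : ℕ} (h : 0 < n) (hn : 7 ≤ n) (Λ M : ℝ) (hM : M ≠ 0)
    (j : ({p : Fin n × Fin n // p.1 < p.2} × Bool) ⊕ Fin n ⊕
      {ε : Fin n → Bool // ε ⟨0, h⟩ = true})
    (s t : ℝ)
    (hj : ∀ u : Fin n, Fnsystem n h Λ M j u = if u.1 < 3 then (s+t)*M else (s-t)*M)
    (hja : j ≠ Sum.inr (Sum.inr ⟨fun _ => true, rfl⟩))
    (hjb : j ≠ Sum.inr (Sum.inr ⟨fun u => decide (u.1 < 3), by norm_num⟩)) :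
    Fnsystem n h Λ M j = 0 := by
  match j with
  | Sum.inl ⟨⟨⟨p1, p2⟩, hp⟩, b⟩ =>
    have hp' : p1.1 < p2.1 := hp
    have ex1 : ∃ k, k < 3 ∧ k ≠ p1.1 ∧ k ≠ p2.1 := by
      by_cases h0 : p1.1 = 0 ∨ p2.1 = 0
      · by_cases h1 : p1.1 = 1 ∨ p2.1 = 1
        · exact ⟨2, by omega⟩
        · exact ⟨1, by omega⟩
      · exact ⟨0, by omega⟩
    have ex2 : ∃ k, 3 ≤ k ∧ k < 6 ∧ k ≠ p1.1 ∧ k ≠ p2.1 := by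
      by_cases h3 : p1.1 = 3 ∨ p2.1 = 3
      · by_cases h4 : p1.1 = 4 ∨ p2.1 = 4
        · exact ⟨5, by omega⟩
        · exact ⟨4, by omega⟩
      · exact ⟨3, by omega⟩
    obtain ⟨k1, hk1, hk1a, hk1b⟩ := ex1
    obtain ⟨k2, hk2, hk2', hk2a, hk2b⟩ := ex2
    set u1 : Fin n := ⟨k1, by omega⟩
    set u2 : Fin n := ⟨k2, by omega⟩
    have e1 := hj u1
    have e2 := hj u2
    rw [if_pos (show u1.1 < 3 from hk1)] at e1
    rw [if_neg (show ¬ u2.1 < 3 by simpa using by omega : ¬ u2.1 < 3)] at e2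
    have z1 : Fnsystem n h Λ M (Sum.inl ⟨⟨⟨p1, p2⟩, hp⟩, b⟩) u1 = 0 := by
      simp only [Fnsystem]
      rw [if_neg (show u1 ≠ p1 from fun hh => hk1a (by rw [← hh])),
        if_neg (show u1 ≠ p2 from fun hh => hk1b (by rw [← hh]))]
      ring
    have z2 : Fnsystem n h Λ M (Sum.inl ⟨⟨⟨p1, p2⟩, hp⟩, b⟩) u2 = 0 := by
      simp only [Fnsystem]
      rw [if_neg (show u2 ≠ p1 from fun hh => hk2a (by rw [← hh])),
        if_neg (show u2 ≠ p2 from fun hh => hk2b (by rw [← hh]))]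
      ring
    have hP : (s+t)*M = 0 := by rw [← e1, z1]
    have hQ : (s-t)*M = 0 := by rw [← e2, z2]
    funext u
    rw [hj u, hP, hQ]
    simp
  | Sum.inr (Sum.inl i) =>
    have ex1 : ∃ k, k < 3 ∧ k ≠ i.1 := by
      by_cases h0 : i.1 = 0
      · exact ⟨1, by omega⟩
      · exact ⟨0, by omega⟩
    have ex2 : ∃ k, 3 ≤ k ∧ k < 5 ∧ k ≠ i.1 := by
      by_cases h3 : i.1 = 3
      · exact ⟨4, by omega⟩
      · exact ⟨3, by omega⟩
    obtain ⟨k1, hk1, hk1a⟩ := ex1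
    obtain ⟨k2, hk2, hk2', hk2a⟩ := ex2
    set u1 : Fin n := ⟨k1, by omega⟩
    set u2 : Fin n := ⟨k2, by omega⟩
    have e1 := hj u1
    have e2 := hj u2
    rw [if_pos (show u1.1 < 3 from hk1)] at e1
    rw [if_neg (show ¬ u2.1 < 3 by simpa using by omega : ¬ u2.1 < 3)] at e2
    have z1 : Fnsystem n h Λ M (Sum.inr (Sum.inl i)) u1 = 0 := by
      simp only [Fnsystem]
      rw [if_neg (show u1 ≠ i from fun hh => hk1a (by rw [← hh]))]
    have z2 : Fnsystem n h Λ M (Sum.inr (Sum.inl i)) u2 = 0 := by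
      simp only [Fnsystem]
      rw [if_neg (show u2 ≠ i from fun hh => hk2a (by rw [← hh]))]
    have hP : (s+t)*M = 0 := by rw [← e1, z1]
    have hQ : (s-t)*M = 0 := by rw [← e2, z2]
    funext u
    rw [hj u, hP, hQ]
    simp
  | Sum.inr (Sum.inr ε) =>
    exfalso
    have h0 := hj ⟨0, by omega⟩
    rw [if_pos (by norm_num : (0:ℕ) < 3)] at h0
    have h0' : Fnsystem n h Λ M (Sum.inr (Sum.inr ε)) ⟨0, by omega⟩ = M := by
      simp only [Fnsystem]
      rw [ε.2]
      norm_num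
    have hPM : (s+t)*M = M := by rw [← h0, h0']
    have htrue : ∀ u : Fin n, u.1 < 3 → ε.1 u = true := by
      intro u hu
      have := hj u
      rw [if_pos hu, hPM] at this
      exact sig_true hM this
    have h3 := hj ⟨3, by omega⟩
    rw [if_neg (by norm_num : ¬ (3:ℕ) < 3)] at h3
    cases hb3 : ε.1 ⟨3, by omega⟩
    · have hQM : (s-t)*M = -M := by
        rw [← h3]
        simp only [Fnsystem]
        rw [hb3]
        norm_num
      have hfalse : ∀ u : Fin n, ¬ u.1 < 3 → ε.1 u = false := by
        intro u hu
        have := hj u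
        rw [if_neg hu, hQM] at this
        exact sig_false hM this
      apply hjb
      congr 1
      congr 1
      apply Subtype.ext
      funext u
      by_cases hu : u.1 < 3
      · simp [htrue u hu, hu]
      · simp [hfalse u hu, hu]
    · have hQM : (s-t)*M = M := by
        rw [← h3]
        simp only [Fnsystem]
        rw [hb3]
        norm_num
      have htrue' : ∀ u : Fin n, ¬ u.1 < 3 → ε.1 u = true := by
        intro u hu
        have := hj u
        rw [if_neg hu, hQM] at this
        exact sig_true hM this
      apply hja
      congr 1
      congr 1
      apply Subtype.ext
      funext u
      by_cases hu : u.1 < 3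
      · exact htrue u hu
      · exact htrue' u hu

-- the signed count sum
lemma sum_signs {n : ℕ} (hn : 3 ≤ n) :
    ∑ u : Fin n, (if u.1 < 3 then (1:ℝ) else -1) = 6 - (n:ℝ) := by
  rw [Fin.sum_univ_eq_sum_range (fun k => if k < 3 then (1:ℝ) else -1) n]
  rw [Finset.range_eq_Ico, ← Finset.sum_Ico_consecutive _ (by omega : 0 ≤ 3) hn]
  have h1 : ∑ k ∈ Finset.Ico 0 3, (if k < 3 then (1:ℝ) else -1) = 3 := by
    rw [← Finset.range_eq_Ico]
    norm_num [Finset.sum_range_succ]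
  have h2 : ∑ k ∈ Finset.Ico 3 n, (if k < 3 then (1:ℝ) else -1) = -((n:ℝ) - 3) := by
    rw [Finset.sum_congr rfl (fun k hk => if_neg (by
      rw [Finset.mem_Ico] at hk; omega))]
    rw [Finset.sum_const, Nat.card_Ico, nsmul_eq_mul]
    have : ((n - 3 : ℕ) : ℝ) = (n:ℝ) - 3 := by
      push_cast [Nat.cast_sub hn]; ring
    rw [this]; ring
  rw [h1, h2]; ring

set_option maxHeartbeats 1000000 in
theorem main_aux (n : ℕ) (h : 0 < n) (hn : 7 ≤ n) (Λ M : ℝ) :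
    IsVeeSystem (Fnsystem n h Λ M) → M = 0 := by
  intro hV
  by_contra hM
  obtain ⟨-, hunit, hvee⟩ := hV
  set A := Fnsystem n h Λ M with hAdef
  have hdet : IsUnit (gram A).det := (Matrix.isUnit_iff_isUnit_det _).mp hunit
  set αidx : ({p : Fin n × Fin n // p.1 < p.2} × Bool) ⊕ Fin n ⊕
      {ε : Fin n → Bool // ε ⟨0, h⟩ = true} :=
    Sum.inr (Sum.inr ⟨fun _ => true, rfl⟩) with hαidx
  set βidx : ({p : Fin n × Fin n // p.1 < p.2} × Bool) ⊕ Fin n ⊕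
      {ε : Fin n → Bool // ε ⟨0, h⟩ = true} :=
    Sum.inr (Sum.inr ⟨fun u => decide (u.1 < 3), by norm_num⟩) with hβidx
  have hα : ∀ u : Fin n, A αidx u = M := by
    intro u; simp [hAdef, hαidx, Fnsystem]
  have hβ : ∀ u : Fin n, A βidx u = if u.1 < 3 then M else -M := by
    intro u
    simp only [hAdef, hβidx, Fnsystem, decide_eq_true_eq]
    split <;> ring
  have hne : αidx ≠ βidx := by
    intro hcontra
    rw [hαidx, hβidx] at hcontra
    simp only [Sum.inr.injEq, Subtype.mk.injEq] at hcontra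
    have := congrFun hcontra ⟨3, by omega⟩
    simp at this
  set Pl : Submodule ℝ (Fin n → ℝ) := Submodule.span ℝ {A αidx, A βidx} with hPl
  have hαPl : A αidx ∈ Pl := Submodule.subset_span (Set.mem_insert _ _)
  have hβPl : A βidx ∈ Pl := Submodule.subset_span (Set.mem_insert_of_mem _ rfl)
  have hrank : Module.finrank ℝ Pl = 2 := by
    have hli : LinearIndependent ℝ ![A αidx, A βidx] := by
      rw [LinearIndependent.pair_iff]
      intro a b hab
      have e0 := congrFun hab ⟨0, by omega⟩
      have e3 := congrFun hab ⟨3, by omega⟩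
      simp only [Pi.add_apply, Pi.smul_apply, smul_eq_mul, Pi.zero_apply] at e0 e3
      rw [hα, hβ] at e0 e3
      norm_num at e0 e3
      have h1 : (a + b) * M = 0 := by linarith
      have h2 : (a - b) * M = 0 := by linarith
      rcases mul_eq_zero.mp h1 with h1' | h1'
      · rcases mul_eq_zero.mp h2 with h2' | h2'
        · constructor <;> linarith
        · exact absurd h2' hM
      · exact absurd h1' hM
    have hr := finrank_span_eq_card hli
    have hrange : Set.range ![A αidx, A βidx] = {A αidx, A βidx} := by
      exact Matrix.range_cons_cons_empty _ _ _
    rw [hrange] at hr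
    rw [hPl, hr]
    simp
  obtain ⟨lam, hs⟩ := hvee Pl hrank αidx hαPl
  -- apply gram to both sides
  have hkey : ∀ x, gram A *ᵥ vee A x = x := by
    intro x; rw [vee, Matrix.mulVec_mulVec, Matrix.mul_nonsing_inv _ hdet, Matrix.one_mulVec]
  set F := Finset.univ.filter (fun j => A j ∈ Pl) with hF
  have heq : ∑ j ∈ F, (A j ⬝ᵥ vee A (A αidx)) • A j = lam • A αidx := by
    have hLHS := map_sum (Matrix.mulVecLin (gram A))
      (fun j => (A j ⬝ᵥ vee A (A αidx)) • vee A (A j)) F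
    simp only [Matrix.mulVecLin_apply, _root_.map_smul] at hLHS
    calc ∑ j ∈ F, (A j ⬝ᵥ vee A (A αidx)) • A j
        = gram A *ᵥ (∑ j ∈ F, (A j ⬝ᵥ vee A (A αidx)) • vee A (A j)) := by
          rw [hLHS]
          refine Finset.sum_congr rfl (fun j _ => ?_)
          rw [hkey]
      _ = gram A *ᵥ (lam • vee A (A αidx)) := by rw [hs]
      _ = lam • A αidx := by rw [Matrix.mulVec_smul, hkey]
  -- reduce to two terms
  have hzero : ∀ j ∈ F, j ≠ αidx → j ≠ βidx → (A j ⬝ᵥ vee A (A αidx)) • A j = 0 := by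
    intro j hjF hj1 hj2
    rw [hF, Finset.mem_filter] at hjF
    obtain ⟨a, b, hab⟩ := Submodule.mem_span_pair.mp hjF.2
    have hj' : ∀ u : Fin n, Fnsystem n h Λ M j u = if u.1 < 3 then (a+b)*M else (a-b)*M := by
      intro u
      rw [← hAdef, ← congrFun hab u]
      simp only [Pi.add_apply, Pi.smul_apply, smul_eq_mul]
      rw [hα, hβ]
      split <;> ring
    have hj0 : Fnsystem n h Λ M j = 0 := classify h hn Λ M hM j a b hj'
      (by rw [hαidx] at hj1; exact hj1) (by rw [hβidx] at hj2; exact hj2)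
    rw [hAdef, hj0, smul_zero]
  have hFα : αidx ∈ F := by rw [hF, Finset.mem_filter]; exact ⟨Finset.mem_univ _, hαPl⟩
  have hFβ : βidx ∈ F := by rw [hF, Finset.mem_filter]; exact ⟨Finset.mem_univ _, hβPl⟩
  rw [my_sum_eq_add hFα hFβ hne hzero] at heq
  -- coordinates 0 and 3
  have e0 := congrFun heq ⟨0, by omega⟩
  have e3 := congrFun heq ⟨3, by omega⟩
  simp only [Pi.add_apply, Pi.smul_apply, smul_eq_mul, hα, hβ] at e0 e3
  norm_num at e0 e3
  have hcβM : (A βidx ⬝ᵥ vee A (A αidx)) * M = 0 := by linarith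
  have hcβ : A βidx ⬝ᵥ vee A (A αidx) = 0 := by
    rcases mul_eq_zero.mp hcβM with h' | h'
    · exact h'
    · exact absurd h' hM
  -- compute the dot product explicitly
  set c : ℝ := (2*(n:ℝ) - 2) + Λ^2 + 2^(n-1) * M^2 with hc
  have hcpos : 0 < c := by
    have h1 : (0:ℝ) ≤ Λ^2 := sq_nonneg _
    have h2 : (0:ℝ) ≤ 2^(n-1) * M^2 :=
      mul_nonneg (pow_nonneg (by norm_num) _) (sq_nonneg _)
    have h3 : (7:ℝ) ≤ (n:ℝ) := by exact_mod_cast hn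
    rw [hc]; linarith
  have hcne : c ≠ 0 := ne_of_gt hcpos
  have hGα : gram A *ᵥ A αidx = c • A αidx := by
    funext u
    simp only [Matrix.mulVec, dotProduct, Pi.smul_apply, smul_eq_mul]
    rw [Finset.sum_congr rfl (fun t _ => by rw [hα t]), ← Finset.sum_mul]
    have hgr := gram_row h Λ M u
    rw [← hAdef] at hgr
    rw [hgr, hα u, hc]
  have hveeα : vee A (A αidx) = c⁻¹ • A αidx := by
    have h1 : gram A *ᵥ (c⁻¹ • A αidx) = A αidx := by
      rw [Matrix.mulVec_smul, hGα, smul_smul, inv_mul_cancel₀ hcne, one_smul]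
    have h2 : vee A (A αidx) = (gram A)⁻¹ *ᵥ (gram A *ᵥ (c⁻¹ • A αidx)) := by
      rw [h1, vee]
    rw [h2, Matrix.mulVec_mulVec, Matrix.nonsing_inv_mul _ hdet, Matrix.one_mulVec]
  rw [hveeα] at hcβ
  rw [dotProduct_smul] at hcβ
  have hβα : A βidx ⬝ᵥ A αidx = (6 - (n:ℝ)) * M^2 := by
    simp only [dotProduct]
    have hterm : ∀ u : Fin n, A βidx u * A αidx u = (if u.1 < 3 then (1:ℝ) else -1) * M^2 := by
      intro u; rw [hα u, hβ u]; split <;> ring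
    rw [Finset.sum_congr rfl (fun u _ => hterm u), ← Finset.sum_mul,
      sum_signs (by omega : 3 ≤ n)]
  rw [hβα] at hcβ
  have h6n : (6:ℝ) - (n:ℝ) ≠ 0 := by
    have h3 : (7:ℝ) ≤ (n:ℝ) := by exact_mod_cast hn
    intro hcon; linarith
  have hM2 : M^2 ≠ 0 := pow_ne_zero _ hM
  have : c⁻¹ ≠ 0 := inv_ne_zero hcne
  simp only [smul_eq_mul, mul_eq_zero] at hcβ
  rcases hcβ with h' | h' | h'
  · exact this h'
  · exact h6n h'
  · exact hM2 h'

/-- for `n ≥ 7`, the set `{e_i ± e_j, Λe_i, M(e_1 ± e_2 ± ⋯ ± e_n)}`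
in `ℝⁿ` is a ∨-system only if `M = 0`. -/
theorem Fnsystem_isVeeSystem_only_if (n : ℕ) (hn : 7 ≤ n) (Λ M : ℝ) :
    IsVeeSystem (Fnsystem n (by omega) Λ M) → M = 0 := by
  exact main_aux n (by omega) hn Λ M
end
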